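/- Let Σ(n) = Σ_{s ∈ {0,1}^n} |Subseq(s)| where Subseq(s) is the set of all distinct subsequences of s including the empty string. Then Σ satisfies the recurrence Σ(n) = 2^{n-1} + 3·Σ(n−1) for n ≥ 1, with Σ(0) = 1. -/

import Mathlib

/-- Total number of distinct subsequences of `s` (including the empty subsequence). -/
def countAll (s : List Bool) : ℕ := (s.sublists.dedup).length

/-- Sum over all binary strings of length `n` of the total number of distinct
subsequences. -/
def Sigma' (n : ℕ) : ℕ := ∑ f : Fin n → Bool, countAll (List.ofFn f)

def A (s : List Bool) : Finset (List Bool) := s.sublists.toFinset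

lemma mem_A {t s : List Bool} : t ∈ A s ↔ t.Sublist s := by
  simp [A, List.mem_sublists]

lemma countAll_eq (s : List Bool) : countAll s = (A s).card := by
  simp [countAll, A, List.card_toFinset]

lemma inter_eq (b : Bool) (s : List Bool) :
    A s ∩ (A s).image (b :: ·) = (A s).filter (fun t => t.head? = some b) := by
  ext t
  simp only [Finset.mem_inter, Finset.mem_image, Finset.mem_filter, mem_A]
  constructor
  · rintro ⟨ht, u, hu, rfl⟩
    exact ⟨ht, rfl⟩
  · rintro ⟨ht, hh⟩
    refine ⟨ht, ?_⟩
    match t, hh with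
    | b' :: u, hh =>
      simp only [List.head?_cons, Option.some.injEq] at hh
      subst hh
      exact ⟨u, ((List.sublist_cons_self _ u).trans ht), rfl⟩

lemma card_A_cons (b : Bool) (s : List Bool) :
    (A (b :: s)).card + ((A s).filter (fun t => t.head? = some b)).card
      = 2 * (A s).card := by
  have hA : A (b :: s) = A s ∪ (A s).image (b :: ·) := by
    ext t
    simp only [mem_A, Finset.mem_union, Finset.mem_image, List.sublist_cons_iff]
    tauto
  have himg : ((A s).image (b :: ·)).card = (A s).card :=
    Finset.card_image_of_injective _ (fun x y h => by simpa using h)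
  have := Finset.card_union_add_card_inter (A s) ((A s).image (b :: ·))
  rw [inter_eq] at this
  rw [hA]
  omega

lemma filter_split (s : List Bool) :
    ((A s).filter (fun t => t.head? = some true)).card
      + ((A s).filter (fun t => t.head? = some false)).card + 1 = (A s).card := by
  have h1 := Finset.card_filter_add_card_filter_not
    (s := A s) (fun t => t.head? = some true)
  have h2 : (A s).filter (fun t => ¬ t.head? = some true)
      = insert [] ((A s).filter (fun t => t.head? = some false)) := by
    ext t
    simp only [Finset.mem_filter, Finset.mem_insert]
    constructor
    · rintro ⟨ht, hh⟩
      match t with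
      | [] => exact Or.inl rfl
      | true :: u => simp at hh
      | false :: u => exact Or.inr ⟨ht, rfl⟩
    · rintro (rfl | ⟨ht, hh⟩)
      · exact ⟨mem_A.2 (List.nil_sublist s), by simp⟩
      · exact ⟨ht, by simp [hh]⟩
  have hnot : [] ∉ (A s).filter (fun t => t.head? = some false) := by simp
  rw [h2, Finset.card_insert_of_notMem hnot] at h1
  omega

theorem stmt_12 :
    Sigma' 0 = 1 ∧ ∀ n : ℕ, 1 ≤ n → Sigma' n = 2 ^ (n - 1) + 3 * Sigma' (n - 1) := by
  constructor
  · decide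
  · rintro n hn
    obtain ⟨m, rfl⟩ : ∃ m, n = m + 1 := ⟨n - 1, by omega⟩
    simp only [Nat.add_sub_cancel]
    -- rewrite Sigma' (m+1) as a double sum
    have key : Sigma' (m + 1)
        = ∑ b : Bool, ∑ f : Fin m → Bool, (A (b :: List.ofFn f)).card := by
      rw [Sigma', ← Fintype.sum_prod_type']
      apply Fintype.sum_equiv ((Fin.consEquiv (fun _ : Fin (m + 1) => Bool)).symm)
      intro f
      rw [countAll_eq]
      congr 1
      rw [List.ofFn_succ]
      rfl
    set g : Bool → (Fin m → Bool) → ℕ :=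
      fun b f => ((A (List.ofFn f)).filter (fun t => t.head? = some b)).card with hg
    have h1 : Sigma' (m + 1) + (∑ f : Fin m → Bool, g true f)
        + (∑ f : Fin m → Bool, g false f) = 4 * Sigma' m := by
      rw [key, Fintype.sum_bool]
      have : Sigma' m = ∑ f : Fin m → Bool, (A (List.ofFn f)).card := by
        simp [Sigma', countAll_eq]
      rw [this, ← Finset.sum_add_distrib, ← Finset.sum_add_distrib,
        ← Finset.sum_add_distrib, Finset.mul_sum]
      refine Finset.sum_congr rfl fun f _ => ?_
      have ht := card_A_cons true (List.ofFn f)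
      have hf := card_A_cons false (List.ofFn f)
      simp only [hg]
      omega
    have h2 : (∑ f : Fin m → Bool, g true f) + (∑ f : Fin m → Bool, g false f)
        + 2 ^ m = Sigma' m := by
      have : Sigma' m = ∑ f : Fin m → Bool, (A (List.ofFn f)).card := by
        simp [Sigma', countAll_eq]
      rw [this, ← Finset.sum_add_distrib]
      have hcard : (2 : ℕ) ^ m = ∑ _f : Fin m → Bool, 1 := by
        simp [Finset.card_univ]
      rw [hcard, ← Finset.sum_add_distrib]
      exact Finset.sum_congr rfl fun f _ => filter_split (List.ofFn f)
    omega
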